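/- For a positive integer n, there exists a connected simple graph of order n whose three metric subgraphs (central, annular, and peripheral subgraphs) are each isomorphic to a path P_m for some m ≥ 1 if and only if n ≥ 13. -/

import Mathlib

/-- Eccentricity of a vertex in a (finite connected) simple graph:
the maximum distance from `v` to any vertex. -/
noncomputable def SimpleGraph.mecc {V : Type*} (G : SimpleGraph V) (v : V) : ℕ :=
  sSup (Set.range (G.dist v))

/-- Radius: the minimum eccentricity. -/
noncomputable def SimpleGraph.mrad {V : Type*} (G : SimpleGraph V) : ℕ :=
  sInf (Set.range G.mecc)

/-- Diameter: the maximum eccentricity. -/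
noncomputable def SimpleGraph.mdiam {V : Type*} (G : SimpleGraph V) : ℕ :=
  sSup (Set.range G.mecc)

/-- The center: the set of vertices of minimum eccentricity. -/
noncomputable def SimpleGraph.mcenter {V : Type*} (G : SimpleGraph V) : Set V :=
  {v | G.mecc v = G.mrad}

/-- The annulus: the set of vertices of intermediate eccentricity. -/
noncomputable def SimpleGraph.mannulus {V : Type*} (G : SimpleGraph V) : Set V :=
  {v | G.mrad < G.mecc v ∧ G.mecc v < G.mdiam}

/-- The periphery: the set of vertices of maximum eccentricity. -/
noncomputable def SimpleGraph.mperiphery {V : Type*} (G : SimpleGraph V) : Set V :=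
  {v | G.mecc v = G.mdiam}

/-- All three metric subgraphs are (nonempty) paths. -/
noncomputable def metricSubgraphsArePaths {V : Type*} (G : SimpleGraph V) : Prop :=
  (∃ m : ℕ, 1 ≤ m ∧ Nonempty (G.induce G.mcenter ≃g SimpleGraph.pathGraph m)) ∧
  (∃ m : ℕ, 1 ≤ m ∧ Nonempty (G.induce G.mannulus ≃g SimpleGraph.pathGraph m)) ∧
  (∃ m : ℕ, 1 ≤ m ∧ Nonempty (G.induce G.mperiphery ≃g SimpleGraph.pathGraph m))

open SimpleGraph
set_option linter.unusedSectionVars false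
section Toolkit
variable {V : Type*} [Fintype V] {G : SimpleGraph V}

lemma mg_bdd (v : V) : BddAbove (Set.range (G.dist v)) :=
  (Set.finite_range _).bddAbove

lemma mg_dist_le_mecc (v w : V) : G.dist v w ≤ G.mecc v :=
  le_csSup (mg_bdd v) ⟨w, rfl⟩

lemma mg_mecc_exists (v : V) : ∃ w, G.dist v w = G.mecc v := by
  have h : G.mecc v ∈ Set.range (G.dist v) :=
    Nat.sSup_mem ⟨0, v, G.dist_self⟩ (mg_bdd v)
  exact h

lemma mg_mecc_le {v : V} {m : ℕ} (h : ∀ w, G.dist v w ≤ m) : G.mecc v ≤ m :=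
  csSup_le ⟨0, v, G.dist_self⟩ (by rintro x ⟨w, rfl⟩; exact h w)

lemma mg_mecc_eq {v : V} {m : ℕ} (h : ∀ w, G.dist v w ≤ m) (h2 : ∃ w, G.dist v w = m) :
    G.mecc v = m := by
  obtain ⟨w, hw⟩ := h2
  exact le_antisymm (mg_mecc_le h) (hw ▸ mg_dist_le_mecc v w)

lemma mg_mrad_le_mecc (v : V) : G.mrad ≤ G.mecc v := Nat.sInf_le ⟨v, rfl⟩

lemma mg_mecc_le_mdiam (v : V) : G.mecc v ≤ G.mdiam :=
  le_csSup ((Set.finite_range _).bddAbove) ⟨v, rfl⟩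

lemma mg_mrad_exists [Nonempty V] : ∃ v, G.mecc v = G.mrad := by
  have h : G.mrad ∈ Set.range G.mecc := by
    apply Nat.sInf_mem
    exact Set.range_nonempty _
  exact h

lemma mg_mdiam_exists [Nonempty V] : ∃ v, G.mecc v = G.mdiam := by
  have h : G.mdiam ∈ Set.range G.mecc :=
    Nat.sSup_mem (Set.range_nonempty _) ((Set.finite_range _).bddAbove)
  exact h

lemma mg_mecc_triangle (hc : G.Connected) (u v : V) :
    G.mecc u ≤ G.dist u v + G.mecc v := by
  apply mg_mecc_le
  intro w
  calc G.dist u w ≤ G.dist u v + G.dist v w := hc.dist_triangle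
    _ ≤ G.dist u v + G.mecc v := by have := mg_dist_le_mecc (G := G) v w; omega

/-- an antipode of a vertex in the periphery is in the periphery -/
lemma mg_antipode (v : V) (hv : G.mecc v = G.mdiam) :
    ∃ w, G.dist v w = G.mdiam ∧ G.mecc w = G.mdiam := by
  obtain ⟨w, hw⟩ := mg_mecc_exists (G := G) v
  have h1 : G.dist v w = G.mdiam := by rw [hw, hv]
  have h2 : G.mdiam ≤ G.mecc w := by
    rw [← h1, G.dist_comm]; exact mg_dist_le_mecc w v
  exact ⟨w, h1, le_antisymm (mg_mecc_le_mdiam w) h2⟩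

end Toolkit

lemma mg_first {V : Type*} {G : SimpleGraph V} (hc : G.Connected) {x y : V}
    (h : 0 < G.dist x y) : ∃ v, G.Adj x v ∧ G.dist v y + 1 ≤ G.dist x y := by
  obtain ⟨w, hw⟩ := hc.exists_walk_length_eq_dist x y
  cases w with
  | nil => rw [SimpleGraph.Walk.length_nil] at hw; omega
  | cons hadj p =>
    rw [SimpleGraph.Walk.length_cons] at hw
    exact ⟨_, hadj, by have := SimpleGraph.dist_le p; omega⟩

lemma mg_mid {V : Type*} {G : SimpleGraph V} (hc : G.Connected) {x y : V}
    (h : G.dist x y = 2) : ∃ v, G.Adj x v ∧ G.Adj v y := by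
  obtain ⟨w, hw⟩ := hc.exists_walk_length_eq_dist x y
  rw [h] at hw
  cases w with
  | nil => rw [SimpleGraph.Walk.length_nil] at hw; omega
  | cons h1 p =>
    cases p with
    | nil => rw [SimpleGraph.Walk.length_cons, SimpleGraph.Walk.length_nil] at hw; omega
    | cons h2 q =>
      rw [SimpleGraph.Walk.length_cons, SimpleGraph.Walk.length_cons] at hw
      have hq : q.length = 0 := by omega
      have hq2 := SimpleGraph.Walk.eq_of_length_eq_zero hq
      exact ⟨_, h1, hq2 ▸ h2⟩

lemma mg_pathWalk_le {m : ℕ} (a b : Fin m) (h : a.val ≤ b.val) :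
    ∃ w : (pathGraph m).Walk a b, w.length = b.val - a.val := by
  obtain ⟨d, hd⟩ : ∃ d, b.val - a.val = d := ⟨_, rfl⟩
  induction d generalizing b with
  | zero =>
    have : a = b := Fin.ext (by omega)
    subst this
    exact ⟨SimpleGraph.Walk.nil, by rw [SimpleGraph.Walk.length_nil]; omega⟩
  | succ d ih =>
    have hb : 0 < b.val := by omega
    set b' : Fin m := ⟨b.val - 1, by omega⟩ with hb'
    have hab' : a.val ≤ b'.val := by simp [hb']; omega
    obtain ⟨w, hw⟩ := ih b' hab' (by simp [hb']; omega)
    have hadj : (pathGraph m).Adj b' b := by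
      rw [pathGraph_adj]; left; simp [hb']; omega
    exact ⟨w.concat hadj, by rw [SimpleGraph.Walk.length_concat]; simp [hb'] at hw ⊢; omega⟩

lemma mg_pathWalk {m : ℕ} (a b : Fin m) :
    ∃ w : (pathGraph m).Walk a b, w.length = Nat.dist a.val b.val := by
  rcases le_total a.val b.val with h | h
  · obtain ⟨w, hw⟩ := mg_pathWalk_le a b h
    exact ⟨w, by rw [hw, Nat.dist]; omega⟩
  · obtain ⟨w, hw⟩ := mg_pathWalk_le b a h
    exact ⟨w.reverse, by rw [SimpleGraph.Walk.length_reverse, hw, Nat.dist]; omega⟩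

/-- distance in the big graph is at most the index-distance along an induced path -/
lemma mg_inducedPath_dist {V : Type*} {G : SimpleGraph V} {S : Set V} {m : ℕ}
    (e : G.induce S ≃g pathGraph m) (x y : ↥S) :
    G.dist x.val y.val ≤ Nat.dist (e x).val (e y).val := by
  obtain ⟨w, hw⟩ := mg_pathWalk (e x) (e y)
  let w2 : (G.induce S).Walk x y :=
    (w.map e.symm.toHom).copy (e.symm_apply_apply x) (e.symm_apply_apply y)
  let w3 : G.Walk x.val y.val := w2.map ⟨Subtype.val, fun {a b} hab => hab⟩
  have h3 : w3.length = w.length := by simp only [w3, w2, SimpleGraph.Walk.length_map, SimpleGraph.Walk.length_copy]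
  calc G.dist x.val y.val ≤ w3.length := SimpleGraph.dist_le w3
    _ ≤ _ := by omega

lemma mg_ncard_eq {V : Type*} {S : Set V} {m : ℕ} (e : ↥S ≃ Fin m) : S.ncard = m := by
  rw [← Nat.card_coe_set_eq, Nat.card_congr e, Nat.card_eq_fintype_card, Fintype.card_fin]

theorem mg_lower {n : ℕ} (G : SimpleGraph (Fin n)) (hc : G.Connected)
    (h : metricSubgraphsArePaths G) : 13 ≤ n := by
  obtain ⟨⟨mc, hmc1, ⟨ec⟩⟩, ⟨ma, hma1, ⟨ea⟩⟩, ⟨mp, hmp1, ⟨ep⟩⟩⟩ := h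
  set r := G.mrad with hr
  set d := G.mdiam with hd
  obtain ⟨c0', -⟩ : ∃ _v : ↥G.mcenter, True := ⟨ec.symm.toEquiv ⟨0, hmc1⟩, trivial⟩
  obtain ⟨v1', -⟩ : ∃ _v : ↥G.mannulus, True := ⟨ea.symm.toEquiv ⟨0, hma1⟩, trivial⟩
  set c0 := c0'.val with hc0def
  have hc0e : G.mecc c0 = r := c0'.property
  have hv1 : r < G.mecc v1'.val ∧ G.mecc v1'.val < d := v1'.property
  have hrd : r + 2 ≤ d := by omega
  obtain ⟨x0', -⟩ : ∃ _v : ↥G.mperiphery, True := ⟨ep.symm.toEquiv ⟨0, hmp1⟩, trivial⟩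
  set x0 := x0'.val with hx0def
  have hx0 : G.mecc x0 = d := x0'.property
  have hd2r : d ≤ 2 * r := by
    obtain ⟨y, hy1, hy2⟩ := mg_antipode x0 hx0
    have t1 : G.dist x0 y ≤ G.dist x0 c0 + G.dist c0 y := hc.dist_triangle
    have t2 : G.dist x0 c0 ≤ r := by
      rw [G.dist_comm, ← hc0e]; exact mg_dist_le_mecc c0 x0
    have t3 : G.dist c0 y ≤ r := by rw [← hc0e]; exact mg_dist_le_mecc c0 y
    omega
  have hr2 : 2 ≤ r := by omega
  have hcc : G.mcenter.ncard = mc := mg_ncard_eq ec.toEquiv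
  have hca : G.mannulus.ncard = ma := mg_ncard_eq ea.toEquiv
  have hcp : G.mperiphery.ncard = mp := mg_ncard_eq ep.toEquiv
  have hdisj1 : Disjoint G.mcenter G.mannulus := by
    rw [Set.disjoint_left]
    rintro v hv hv2
    have h1 : G.mecc v = r := hv
    have h2 : r < G.mecc v ∧ G.mecc v < d := hv2
    omega
  have hdisj2 : Disjoint (G.mcenter ∪ G.mannulus) G.mperiphery := by
    rw [Set.disjoint_left]
    rintro v (hv | hv) hv2
    · have h2 : G.mecc v = d := hv2
      have h1 : G.mecc v = r := hv
      omega
    · have h2 : G.mecc v = d := hv2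
      have h1 : r < G.mecc v ∧ G.mecc v < d := hv
      omega
  have hsum : mc + ma + mp ≤ n := by
    have h1 : (G.mcenter ∪ G.mannulus ∪ G.mperiphery).ncard ≤ n := by
      have := Set.ncard_le_ncard (Set.subset_univ (G.mcenter ∪ G.mannulus ∪ G.mperiphery))
        Set.finite_univ
      rwa [Set.ncard_univ, Nat.card_eq_fintype_card, Fintype.card_fin] at this
    rw [Set.ncard_union_eq hdisj2 (Set.toFinite _) (Set.toFinite _),
        Set.ncard_union_eq hdisj1 (Set.toFinite _) (Set.toFinite _), hcc, hca, hcp] at h1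
    exact h1
  -- the periphery has at least 2d vertices
  have hp2d : 2 * d ≤ mp := by
    by_contra h'
    push_neg at h'
    set i0 : Fin mp := ⟨min (d-1) (mp-1), by omega⟩ with hi0
    set z' := ep.symm.toEquiv i0 with hz'
    have hz : G.mecc z'.val = d := z'.property
    obtain ⟨y, hy1, hy2⟩ := mg_antipode z'.val hz
    have hkey := mg_inducedPath_dist ep z' ⟨y, hy2⟩
    have hzz : ep z' = i0 := ep.toEquiv.apply_symm_apply i0
    rw [hzz, hy1] at hkey
    have hlt : (ep.toEquiv ⟨y, hy2⟩).val < mp := Fin.is_lt _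
    have hi0v : i0.val = min (d-1) (mp-1) := rfl
    rw [Nat.dist] at hkey
    omega
  -- if the center is a single vertex, the annulus is not
  have hkey1 : ¬ (mc = 1 ∧ ma = 1) := by
    rintro ⟨hmc, hma⟩
    obtain ⟨cx, hCs'⟩ := Set.ncard_eq_one.mp (hcc.trans hmc)
    have hCs : G.mcenter = {c0} := by
      have hm : c0 ∈ G.mcenter := c0'.property
      rw [hCs'] at hm ⊢
      rw [hm]
    obtain ⟨u, hAs⟩ := Set.ncard_eq_one.mp (hca.trans hma)
    have hu : r < G.mecc u ∧ G.mecc u < d := by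
      have : u ∈ G.mannulus := by rw [hAs]; rfl
      exact this
    have hnbr : ∀ v, G.Adj c0 v → v = u := by
      intro v hv
      have e1 : G.mecc v ≤ G.dist v c0 + G.mecc c0 := mg_mecc_triangle hc v c0
      have e2 : G.dist v c0 = 1 := SimpleGraph.dist_eq_one_iff_adj.mpr hv.symm
      have e3 : r ≤ G.mecc v := mg_mrad_le_mecc v
      have e4 : G.mecc v ≠ r := by
        intro hh
        have hmem : v ∈ G.mcenter := hh
        rw [hCs] at hmem
        exact G.irrefl (show G.Adj c0 c0 from hmem ▸ hv)
      have e5 : v ∈ G.mannulus := ⟨by omega, by omega⟩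
      rw [hAs] at e5; exact e5
    -- c0 is adjacent to u
    have hadj : G.Adj c0 u := by
      obtain ⟨w0, hw0⟩ := mg_mecc_exists (G := G) c0
      have hp : 0 < G.dist c0 w0 := by rw [hw0, hc0e]; omega
      obtain ⟨v, hv1', hv2'⟩ := mg_first hc hp
      exact (hnbr v hv1') ▸ hv1'
    obtain ⟨y, hy⟩ := mg_mecc_exists (G := G) u
    have hyu : r + 1 ≤ G.dist u y := by omega
    have hyne : y ≠ c0 := by
      intro hh
      rw [hh] at hy
      have : G.dist u c0 = 1 := SimpleGraph.dist_eq_one_iff_adj.mpr hadj.symm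
      omega
    have hdy : G.dist c0 y ≤ r := by rw [← hc0e]; exact mg_dist_le_mecc c0 y
    have hdy0 : 0 < G.dist c0 y := hc.pos_dist_of_ne (fun hh => hyne hh.symm)
    obtain ⟨v, hv1', hv2'⟩ := mg_first hc hdy0
    rw [hnbr v hv1'] at hv2'
    omega
  rcases Nat.lt_or_ge d 5 with hd4 | hd5
  · -- d = 4, r = 2
    have hrr : r = 2 := by omega
    have hdd : d = 4 := by omega
    have hdom : ∀ x : Fin n, G.mecc x = 4 → ∃ mx, G.mecc mx = 3 ∧ G.Adj mx x := by
      intro x hx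
      have hdx : G.dist c0 x = 2 := by
        have e1 : G.mecc x ≤ G.dist x c0 + G.mecc c0 := mg_mecc_triangle hc x c0
        have e2 : G.dist c0 x ≤ 2 := by
          rw [← hrr, ← hc0e]; exact mg_dist_le_mecc c0 x
        have e3 : G.dist x c0 = G.dist c0 x := G.dist_comm
        omega
      obtain ⟨v, h1, h2⟩ := mg_mid hc hdx
      refine ⟨v, ?_, h2⟩
      have e1 : G.mecc v ≤ G.dist v c0 + G.mecc c0 := mg_mecc_triangle hc v c0
      have e2 : G.dist v c0 = 1 := SimpleGraph.dist_eq_one_iff_adj.mpr h1.symm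
      have e3 : G.mecc x ≤ G.dist x v + G.mecc v := mg_mecc_triangle hc x v
      have e4 : G.dist x v = 1 := SimpleGraph.dist_eq_one_iff_adj.mpr h2.symm
      rw [hc0e, hrr] at e1
      omega
    have hma4 : 4 ≤ ma := by
      by_contra h'
      push_neg at h'
      set i1 : Fin ma := ⟨min 1 (ma - 1), by omega⟩ with hi1
      set u2' := ea.symm.toEquiv i1 with hu2'
      have hu2a : r < G.mecc u2'.val ∧ G.mecc u2'.val < d := u2'.property
      have hu2e : G.mecc u2'.val = 3 := by omega
      -- u2 is within distance 1 of every annulus vertex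
      have hmid : ∀ v : ↥G.mannulus, G.dist u2'.val v.val ≤ 1 := by
        intro v
        have hkey := mg_inducedPath_dist ea u2' v
        have hzz : ea u2' = i1 := ea.toEquiv.apply_symm_apply i1
        rw [hzz] at hkey
        have hlt : (ea.toEquiv v).val < ma := Fin.is_lt _
        have hi1v : i1.val = min 1 (ma - 1) := rfl
        rw [Nat.dist] at hkey
        omega
      -- u2 is within distance 2 of everything
      have hall : ∀ w, G.dist u2'.val w ≤ 2 := by
        intro w
        have hw1 : r ≤ G.mecc w := mg_mrad_le_mecc w
        have hw2 : G.mecc w ≤ d := mg_mecc_le_mdiam w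
        rcases Nat.lt_or_ge (G.mecc w) 3 with hw3 | hw3
        · have : G.dist u2'.val w ≤ G.mecc w := by
            rw [G.dist_comm]; exact mg_dist_le_mecc w u2'.val
          omega
        rcases Nat.lt_or_ge (G.mecc w) 4 with hw4 | hw4
        · have hwm : w ∈ G.mannulus := ⟨by omega, by omega⟩
          have h5 : G.dist u2'.val w ≤ 1 := hmid ⟨w, hwm⟩
          omega
        · have hwe : G.mecc w = 4 := by omega
          obtain ⟨mw, hmw1, hmw2⟩ := hdom w hwe
          have hwm : mw ∈ G.mannulus := ⟨by omega, by omega⟩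
          have t1 : G.dist u2'.val w ≤ G.dist u2'.val mw + G.dist mw w := hc.dist_triangle
          have t2 : G.dist mw w = 1 := SimpleGraph.dist_eq_one_iff_adj.mpr hmw2
          have t3 : G.dist u2'.val mw ≤ 1 := hmid ⟨mw, hwm⟩
          omega
      have : G.mecc u2'.val ≤ 2 := mg_mecc_le hall
      omega
    omega
  · -- d ≥ 5
    have h3 : 3 ≤ mc + ma := by
      rcases Nat.lt_or_ge mc 2 with hmc2 | hmc2
      · rcases Nat.lt_or_ge ma 2 with hma2 | hma2
        · exact absurd ⟨by omega, by omega⟩ hkey1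
        · omega
      · omega
    omega

/-- adjacency matrix of the 13-vertex model graph -/
def adj13 : Fin 13 → Fin 13 → Bool := fun a b =>
  let e : List (ℕ × ℕ) := [(0,1),(0,2),(0,3),(0,4),(1,2),(2,3),(3,4),
    (5,6),(6,7),(7,8),(8,9),(9,10),(10,11),(11,12),
    (1,7),(1,8),(2,9),(2,10),(3,11),(3,12),(4,5),(4,6)]
  e.any (fun p => (p.1 = a.val ∧ p.2 = b.val) ∨ (p.1 = b.val ∧ p.2 = a.val))

/-- distance matrix of the model graph -/
def D13 : Fin 13 → Fin 13 → ℕ := fun a b =>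
  [[0, 1, 1, 1, 1, 2, 2, 2, 2, 2, 2, 2, 2],
   [1, 0, 1, 2, 2, 3, 2, 1, 1, 2, 2, 3, 3],
   [1, 1, 0, 1, 2, 3, 3, 2, 2, 1, 1, 2, 2],
   [1, 2, 1, 0, 1, 2, 2, 3, 3, 2, 2, 1, 1],
   [1, 2, 2, 1, 0, 1, 1, 2, 3, 3, 3, 2, 2],
   [2, 3, 3, 2, 1, 0, 1, 2, 3, 4, 4, 3, 3],
   [2, 2, 3, 2, 1, 1, 0, 1, 2, 3, 4, 3, 3],
   [2, 1, 2, 3, 2, 2, 1, 0, 1, 2, 3, 4, 4],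
   [2, 1, 2, 3, 3, 3, 2, 1, 0, 1, 2, 3, 4],
   [2, 2, 1, 2, 3, 4, 3, 2, 1, 0, 1, 2, 3],
   [2, 2, 1, 2, 3, 4, 4, 3, 2, 1, 0, 1, 2],
   [2, 3, 2, 1, 2, 3, 3, 4, 3, 2, 1, 0, 1],
   [2, 3, 2, 1, 2, 3, 3, 4, 4, 3, 2, 1, 0]].getD a.val [] |>.getD b.val 0

/-- eccentricities in the model graph -/
def E13 : Fin 13 → ℕ := fun a => if a = 0 then 2 else if a.val ≤ 4 then 3 else 4

/-- witness of eccentricity in the model graph -/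
def W13 : Fin 13 → Fin 13 := fun a =>
  (List.finRange 13).foldl (fun b c => if D13 a b < D13 a c then c else b) 0

lemma adj13_symm : ∀ a b : Fin 13, adj13 a b = adj13 b a := by decide
lemma adj13_irrefl : ∀ a : Fin 13, adj13 a a = false := by decide
lemma adj13_ne : ∀ a b : Fin 13, adj13 a b = true → a ≠ b := by decide
lemma D13_symm : ∀ a b : Fin 13, D13 a b = D13 b a := by decide
lemma D13_self : ∀ a : Fin 13, D13 a a = 0 := by decide
lemma D13_eq_zero : ∀ a b : Fin 13, D13 a b = 0 → a = b := by decide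
lemma D13_lip : ∀ a c b : Fin 13, adj13 a c = true → D13 a b ≤ D13 c b + 1 := by decide
lemma D13_step : ∀ a b : Fin 13, 0 < D13 a b → ∃ c, adj13 b c = true ∧ D13 a c + 1 = D13 a b := by
  decide
lemma D13_step' : ∀ a b : Fin 13, 0 < D13 a b → ∃ c, adj13 a c = true ∧ D13 c b + 1 = D13 a b := by
  decide
lemma D13_le_E13 : ∀ a b : Fin 13, D13 a b ≤ E13 a := by decide
lemma D13_W13 : ∀ a : Fin 13, D13 a (W13 a) = E13 a := by decide
lemma W13_ne : ∀ a : Fin 13, a ≠ 0 → W13 a ≠ 0 := by decide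
lemma D13_row0 : ∀ b : Fin 13, D13 0 b ≤ 2 := by decide
lemma D13_col0 : ∀ a : Fin 13, D13 a 0 ≤ E13 a := by decide
lemma D13_05 : D13 0 5 = 2 := by decide
lemma E13_5 : E13 5 = 4 := by decide
lemma E13_ge2 : ∀ a : Fin 13, 2 ≤ E13 a := by decide
lemma E13_le4 : ∀ a : Fin 13, E13 a ≤ 4 := by decide
lemma E13_ne : ∀ a : Fin 13, a ≠ 0 → E13 a ≠ 2 := by decide
lemma E13_ann : ∀ a : Fin 13, a ≠ 0 → (E13 a = 3 ↔ a.val ≤ 4) := by decide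
lemma E13_ann' : ∀ a : Fin 13, a ≠ 0 → ((2 < E13 a ∧ E13 a < 4) ↔ a.val ≤ 4) := by decide
lemma E13_per : ∀ a : Fin 13, a ≠ 0 → (E13 a = 4 ↔ 5 ≤ a.val) := by decide
lemma adj13_ann : ∀ a b : Fin 13, 1 ≤ a.val → a.val ≤ 4 → 1 ≤ b.val → b.val ≤ 4 →
    (adj13 a b = true ↔ (a.val + 1 = b.val ∨ b.val + 1 = a.val)) := by decide
lemma adj13_per : ∀ a b : Fin 13, 5 ≤ a.val → 5 ≤ b.val →
    (adj13 a b = true ↔ (a.val + 1 = b.val ∨ b.val + 1 = a.val)) := by decide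
lemma adj13_01 : adj13 0 1 = true := by decide
lemma adj13_0 : ∀ b : Fin 13, adj13 0 b = true → b ≠ 0 := fun b h hb => adj13_ne 0 b h (by rw [hb])

variable (k : ℕ)

/-- projection to the model: twins (indices < k) map to vertex 0 -/
def mgRho : Fin (k+12) → Fin 13 := fun i =>
  if i.val < k then 0 else ⟨i.val - k + 1, by omega⟩

/-- section of the projection -/
def mgSigma : Fin 13 → Fin (k+12) := fun a =>
  if a.val = 0 then ⟨0, by omega⟩ else ⟨k + a.val - 1, by omega⟩

/-- the graph on `k + 12` vertices: a path of `k` twins of the model's center vertex,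
together with the 12 non-central model vertices -/
def GG : SimpleGraph (Fin (k+12)) where
  Adj i j := if i.val < k ∧ j.val < k then (i.val + 1 = j.val ∨ j.val + 1 = i.val)
             else adj13 (mgRho k i) (mgRho k j) = true
  symm := by
    constructor
    intro i j h
    by_cases hij : i.val < k ∧ j.val < k
    · rw [if_pos hij] at h
      rw [if_pos ⟨hij.2, hij.1⟩]
      omega
    · rw [if_neg hij] at h
      rw [if_neg (fun hh => hij ⟨hh.2, hh.1⟩), adj13_symm]
      exact h
  loopless := by
    constructor
    intro i
    show ¬ (if i.val < k ∧ i.val < k then (i.val + 1 = i.val ∨ i.val + 1 = i.val)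
            else adj13 (mgRho k i) (mgRho k i) = true)
    split_ifs with hi
    · omega
    · rw [adj13_irrefl]
      simp

variable {k}

lemma mgRho_twin {i : Fin (k+12)} (h : i.val < k) : mgRho k i = 0 := by
  rw [mgRho, if_pos h]

lemma mgRho_fixed {i : Fin (k+12)} (h : k ≤ i.val) : (mgRho k i).val = i.val - k + 1 := by
  rw [mgRho, if_neg (by omega)]

lemma mgRho_fixed_ne {i : Fin (k+12)} (h : k ≤ i.val) : mgRho k i ≠ 0 := by
  intro hh
  have h2 := mgRho_fixed h
  rw [hh] at h2
  rw [Fin.val_zero] at h2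
  omega

lemma mgSigma_zero_val : (mgSigma k 0).val = 0 := by rw [mgSigma]; simp

lemma mgSigma_fixed_val {a : Fin 13} (ha : a ≠ 0) : (mgSigma k a).val = k + a.val - 1 := by
  have hav : a.val ≠ 0 := fun h => ha (Fin.ext (by simp [h]))
  rw [mgSigma, if_neg hav]

lemma mgSigma_fixed_ge {a : Fin 13} (ha : a ≠ 0) : k ≤ (mgSigma k a).val := by
  rw [mgSigma_fixed_val ha]
  have : a.val ≠ 0 := fun h => ha (Fin.ext (by simp [h]))
  omega

lemma mgRho_sigma (hk : 1 ≤ k) (a : Fin 13) : mgRho k (mgSigma k a) = a := by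
  by_cases ha : a = 0
  · subst ha
    apply mgRho_twin
    rw [mgSigma_zero_val]
    omega
  · apply Fin.ext
    rw [mgRho_fixed (mgSigma_fixed_ge ha), mgSigma_fixed_val ha]
    have : a.val ≠ 0 := fun h => ha (Fin.ext (by simp [h]))
    omega

lemma mgSigma_rho {i : Fin (k+12)} (h : k ≤ i.val) : mgSigma k (mgRho k i) = i := by
  apply Fin.ext
  rw [mgSigma_fixed_val (mgRho_fixed_ne h), mgRho_fixed h]
  have := i.isLt
  omega

lemma GG_adj_lt {i j : Fin (k+12)} (hi : i.val < k) (hj : j.val < k) :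
    (GG k).Adj i j ↔ (i.val + 1 = j.val ∨ j.val + 1 = i.val) := by
  show (if _ then _ else _) ↔ _
  rw [if_pos ⟨hi, hj⟩]

lemma GG_adj_other {i j : Fin (k+12)} (h : ¬(i.val < k ∧ j.val < k)) :
    (GG k).Adj i j ↔ adj13 (mgRho k i) (mgRho k j) = true := by
  show (if _ then _ else _) ↔ _
  rw [if_neg h]

/-- σ is a graph homomorphism on model edges -/
lemma mgSigma_adj (hk : 1 ≤ k) {a b : Fin 13} (hab : adj13 a b = true) :
    (GG k).Adj (mgSigma k a) (mgSigma k b) := by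
  by_cases ha : a = 0
  · subst ha
    have hb : b ≠ 0 := adj13_0 b hab
    rw [GG_adj_other (by have := mgSigma_fixed_ge (k := k) hb; omega)]
    rw [mgRho_sigma hk, mgRho_sigma hk]
    exact hab
  · by_cases hb : b = 0
    · subst hb
      have := mgSigma_fixed_ge (k := k) ha
      rw [GG_adj_other (by omega)]
      rw [mgRho_sigma hk, mgRho_sigma hk]
      exact hab
    · have := mgSigma_fixed_ge (k := k) ha
      rw [GG_adj_other (by omega)]
      rw [mgRho_sigma hk, mgRho_sigma hk]
      exact hab


lemma GG_adj_twin_sigma1 (hk : 1 ≤ k) {t : Fin (k+12)} (ht : t.val < k) :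
    (GG k).Adj t (mgSigma k 1) := by
  have h1 : (1 : Fin 13) ≠ 0 := by decide
  have h2 := mgSigma_fixed_ge (k := k) h1
  rw [GG_adj_other (by omega), mgRho_twin ht, mgRho_sigma hk]
  exact adj13_01

/-- walks realizing the model distances -/
lemma mgWalk (hk : 1 ≤ k) (a b : Fin 13) :
    ∃ w : (GG k).Walk (mgSigma k a) (mgSigma k b), w.length = D13 a b := by
  obtain ⟨m, hm⟩ : ∃ m, D13 a b = m := ⟨_, rfl⟩
  induction m generalizing b with
  | zero =>
    have : a = b := D13_eq_zero a b hm
    subst this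
    exact ⟨SimpleGraph.Walk.nil, by rw [SimpleGraph.Walk.length_nil, hm]⟩
  | succ m ih =>
    obtain ⟨c, hc1, hc2⟩ := D13_step a b (by omega)
    obtain ⟨w, hw⟩ := ih c (by omega)
    refine ⟨w.concat (mgSigma_adj hk (by rw [adj13_symm]; exact hc1)), ?_⟩
    rw [SimpleGraph.Walk.length_concat]
    omega

/-- every twin has the same distances as `σ 0` to fixed vertices -/
lemma mgWalkTwin (hk : 1 ≤ k) {t : Fin (k+12)} (ht : t.val < k) {b : Fin 13} (hb : b ≠ 0) :
    ∃ w : (GG k).Walk t (mgSigma k b), w.length = D13 0 b := by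
  have hpos : 0 < D13 0 b := by
    rcases Nat.eq_zero_or_pos (D13 0 b) with h | h
    · exact absurd (D13_eq_zero 0 b h).symm hb
    · exact h
  obtain ⟨c, hc1, hc2⟩ := D13_step' 0 b hpos
  have hcne : c ≠ 0 := adj13_0 c hc1
  obtain ⟨w, hw⟩ := mgWalk hk c b
  have hadj : (GG k).Adj t (mgSigma k c) := by
    have h2 := mgSigma_fixed_ge (k := k) hcne
    rw [GG_adj_other (by omega), mgRho_twin ht, mgRho_sigma hk]
    exact hc1
  exact ⟨SimpleGraph.Walk.cons hadj w, by rw [SimpleGraph.Walk.length_cons]; omega⟩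

lemma mgTwinTwin (hk : 1 ≤ k) {t s : Fin (k+12)} (ht : t.val < k) (hs : s.val < k) :
    (GG k).dist t s ≤ 2 := by
  by_cases hts : t = s
  · subst hts; rw [SimpleGraph.dist_self]; omega
  · have h1 : (GG k).Adj t (mgSigma k 1) := GG_adj_twin_sigma1 hk ht
    have h2 : (GG k).Adj (mgSigma k 1) s := (GG_adj_twin_sigma1 hk hs).symm
    have := SimpleGraph.dist_le (SimpleGraph.Walk.cons h1 (SimpleGraph.Walk.cons h2 SimpleGraph.Walk.nil))
    simpa using this

/-- projection bound: distances in `GG k` are at least the model distances of projections -/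
lemma mgProj {x y : Fin (k+12)} (w : (GG k).Walk x y) :
    D13 (mgRho k x) (mgRho k y) ≤ w.length := by
  induction w with
  | nil => rw [D13_self, SimpleGraph.Walk.length_nil]
  | @cons u v z h p ih =>
    rw [SimpleGraph.Walk.length_cons]
    by_cases huv : u.val < k ∧ v.val < k
    · rw [mgRho_twin huv.1, ← mgRho_twin huv.2]
      omega
    · rw [GG_adj_other huv] at h
      have := D13_lip (mgRho k u) (mgRho k v) (mgRho k z) h
      omega

lemma GG_conn (hk : 1 ≤ k) : (GG k).Connected := by
  rw [SimpleGraph.connected_iff]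
  refine ⟨?_, ⟨⟨0, by omega⟩⟩⟩
  have key : ∀ x : Fin (k+12), (GG k).Reachable x (mgSigma k 1) := by
    intro x
    by_cases hx : x.val < k
    · exact (GG_adj_twin_sigma1 hk hx).reachable
    · obtain ⟨w, -⟩ := mgWalk hk (mgRho k x) 1
      rw [mgSigma_rho (by omega)] at w
      exact w.reachable
  intro x y
  exact (key x).trans (key y).symm

/-- distances: twin to fixed -/
lemma GG_dist_tf (hk : 1 ≤ k) {t v : Fin (k+12)} (ht : t.val < k) (hv : k ≤ v.val) :
    (GG k).dist t v = D13 0 (mgRho k v) := by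
  apply le_antisymm
  · have hx := mgWalkTwin hk ht (mgRho_fixed_ne hv)
    rw [mgSigma_rho hv] at hx
    obtain ⟨w, hw⟩ := hx
    calc (GG k).dist t v ≤ w.length := SimpleGraph.dist_le w
      _ = _ := hw
  · obtain ⟨w, hw⟩ := (GG_conn hk).exists_walk_length_eq_dist t v
    have := mgProj w
    rw [mgRho_twin ht] at this
    omega

/-- distances: fixed to fixed -/
lemma GG_dist_ff (hk : 1 ≤ k) {u v : Fin (k+12)} (hu : k ≤ u.val) (hv : k ≤ v.val) :
    (GG k).dist u v = D13 (mgRho k u) (mgRho k v) := by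
  apply le_antisymm
  · have hx := mgWalk hk (mgRho k u) (mgRho k v)
    rw [mgSigma_rho hu, mgSigma_rho hv] at hx
    obtain ⟨w, hw⟩ := hx
    calc (GG k).dist u v ≤ w.length := SimpleGraph.dist_le w
      _ = _ := hw
  · obtain ⟨w, hw⟩ := (GG_conn hk).exists_walk_length_eq_dist u v
    have := mgProj w
    omega

/-- eccentricity of a twin is 2 -/
lemma GG_mecc_twin (hk : 1 ≤ k) {t : Fin (k+12)} (ht : t.val < k) : (GG k).mecc t = 2 := by
  apply mg_mecc_eq
  · intro w
    by_cases hw : w.val < k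
    · exact mgTwinTwin hk ht hw
    · rw [GG_dist_tf hk ht (by omega)]
      exact D13_row0 _
  · refine ⟨mgSigma k 5, ?_⟩
    have h5 : (5 : Fin 13) ≠ 0 := by decide
    rw [GG_dist_tf hk ht (mgSigma_fixed_ge h5), mgRho_sigma hk]
    exact D13_05

/-- eccentricity of a fixed vertex -/
lemma GG_mecc_fixed (hk : 1 ≤ k) {v : Fin (k+12)} (hv : k ≤ v.val) :
    (GG k).mecc v = E13 (mgRho k v) := by
  apply mg_mecc_eq
  · intro w
    by_cases hw : w.val < k
    · rw [SimpleGraph.dist_comm, GG_dist_tf hk hw (by omega)]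
      calc D13 0 (mgRho k v) = D13 (mgRho k v) 0 := D13_symm 0 _
        _ ≤ E13 (mgRho k v) := D13_col0 _
    · rw [GG_dist_ff hk hv (by omega)]
      exact D13_le_E13 _ _
  · have hwne := W13_ne (mgRho k v) (mgRho_fixed_ne hv)
    refine ⟨mgSigma k (W13 (mgRho k v)), ?_⟩
    rw [GG_dist_ff hk hv (mgSigma_fixed_ge hwne), mgRho_sigma hk]
    exact D13_W13 _

variable {k : ℕ}

lemma GG_mrad (hk : 1 ≤ k) : (GG k).mrad = 2 := by
  apply le_antisymm
  · have h0 : ((⟨0, by omega⟩ : Fin (k+12))).val < k := by show 0 < k; omega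
    exact Nat.sInf_le ⟨_, GG_mecc_twin hk h0⟩
  · apply le_csInf (Set.range_nonempty _)
    rintro x ⟨v, rfl⟩
    by_cases hv : v.val < k
    · rw [GG_mecc_twin hk hv]
    · rw [GG_mecc_fixed hk (by omega)]
      exact E13_ge2 _
lemma GG_mdiam (hk : 1 ≤ k) : (GG k).mdiam = 4 := by
  apply le_antisymm
  · apply csSup_le (Set.range_nonempty _)
    rintro x ⟨v, rfl⟩
    by_cases hv : v.val < k
    · rw [GG_mecc_twin hk hv]; omega
    · rw [GG_mecc_fixed hk (by omega)]
      exact E13_le4 _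
  · apply le_csSup ((Set.finite_range _).bddAbove)
    have h5 : (5 : Fin 13) ≠ 0 := by decide
    refine ⟨mgSigma k 5, ?_⟩
    rw [GG_mecc_fixed hk (mgSigma_fixed_ge h5), mgRho_sigma hk, E13_5]

lemma GG_center (hk : 1 ≤ k) : (GG k).mcenter = {v : Fin (k+12) | v.val < k} := by
  ext v
  simp only [SimpleGraph.mcenter, Set.mem_setOf_eq, GG_mrad hk]
  by_cases hv : v.val < k
  · simp [GG_mecc_twin hk hv, hv]
  · rw [GG_mecc_fixed hk (by omega)]
    have hne := E13_ne (mgRho k v) (mgRho_fixed_ne (by omega))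
    constructor
    · intro h; exact absurd h hne
    · intro h; omega

lemma GG_annulus (hk : 1 ≤ k) :
    (GG k).mannulus = {v : Fin (k+12) | k ≤ v.val ∧ v.val < k + 4} := by
  ext v
  simp only [SimpleGraph.mannulus, Set.mem_setOf_eq, GG_mrad hk, GG_mdiam hk]
  by_cases hv : v.val < k
  · rw [GG_mecc_twin hk hv]
    constructor
    · intro h; omega
    · intro h; omega
  · rw [GG_mecc_fixed hk (by omega)]
    have hrv : (mgRho k v).val = v.val - k + 1 := mgRho_fixed (by omega)
    have h1 := E13_ann' (mgRho k v) (mgRho_fixed_ne (by omega))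
    constructor
    · intro h; have := h1.mp h; omega
    · intro h; exact h1.mpr (by omega)

lemma GG_periphery (hk : 1 ≤ k) :
    (GG k).mperiphery = {v : Fin (k+12) | k + 4 ≤ v.val} := by
  ext v
  simp only [SimpleGraph.mperiphery, Set.mem_setOf_eq, GG_mdiam hk]
  by_cases hv : v.val < k
  · rw [GG_mecc_twin hk hv]
    constructor
    · intro h; omega
    · intro h; omega
  · rw [GG_mecc_fixed hk (by omega)]
    have hrv : (mgRho k v).val = v.val - k + 1 := mgRho_fixed (by omega)
    have h1 := E13_per (mgRho k v) (mgRho_fixed_ne (by omega))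
    constructor
    · intro h; have := h1.mp h; omega
    · intro h; exact h1.mpr (by omega)

def isoC (hk : 1 ≤ k) : (GG k).induce {v : Fin (k+12) | v.val < k} ≃g pathGraph k where
  toFun x := ⟨x.val.val, x.prop⟩
  invFun i := ⟨⟨i.val, by omega⟩, i.isLt⟩
  left_inv x := by apply Subtype.ext; apply Fin.ext; rfl
  right_inv i := by apply Fin.ext; rfl
  map_rel_iff' := by
    intro a b
    rw [pathGraph_adj]
    have ha : a.val.val < k := a.prop
    have hb : b.val.val < k := b.prop
    show _ ↔ (GG k).Adj a.val b.val
    rw [GG_adj_lt ha hb]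
    exact Iff.rfl

def isoA (hk : 1 ≤ k) :
    (GG k).induce {v : Fin (k+12) | k ≤ v.val ∧ v.val < k + 4} ≃g pathGraph 4 where
  toFun x := ⟨x.val.val - k, by obtain ⟨h1, h2⟩ := x.prop; omega⟩
  invFun i := ⟨⟨k + i.val, by have := i.isLt; omega⟩, by
    constructor
    · show k ≤ k + i.val; omega
    · show k + i.val < k + 4; have := i.isLt; omega⟩
  left_inv x := by
    apply Subtype.ext; apply Fin.ext
    show k + (x.val.val - k) = x.val.val
    obtain ⟨h1, h2⟩ := x.prop
    omega
  right_inv i := by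
    apply Fin.ext
    show (k + i.val) - k = i.val
    omega
  map_rel_iff' := by
    intro a b
    rw [pathGraph_adj]
    have ha : k ≤ a.val.val ∧ a.val.val < k + 4 := a.prop
    have hb : k ≤ b.val.val ∧ b.val.val < k + 4 := b.prop
    have hra : (mgRho k a.val).val = a.val.val - k + 1 := mgRho_fixed (by omega)
    have hrb : (mgRho k b.val).val = b.val.val - k + 1 := mgRho_fixed (by omega)
    show _ ↔ (GG k).Adj a.val b.val
    rw [GG_adj_other (by omega)]
    rw [adj13_ann _ _ (by omega) (by omega) (by omega) (by omega)]
    show ((a.val.val - k) + 1 = b.val.val - k ∨ (b.val.val - k) + 1 = a.val.val - k) ↔ _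
    omega

def isoP (hk : 1 ≤ k) :
    (GG k).induce {v : Fin (k+12) | k + 4 ≤ v.val} ≃g pathGraph 8 where
  toFun x := ⟨x.val.val - (k + 4), by have h1 : k + 4 ≤ x.val.val := x.prop; have h2 := x.val.isLt; omega⟩
  invFun i := ⟨⟨k + 4 + i.val, by have := i.isLt; omega⟩, by
    show k + 4 ≤ k + 4 + i.val; omega⟩
  left_inv x := by
    apply Subtype.ext; apply Fin.ext
    show k + 4 + (x.val.val - (k + 4)) = x.val.val
    have h1 : k + 4 ≤ x.val.val := x.prop
    omega
  right_inv i := by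
    apply Fin.ext
    show (k + 4 + i.val) - (k + 4) = i.val
    omega
  map_rel_iff' := by
    intro a b
    rw [pathGraph_adj]
    have ha : k + 4 ≤ a.val.val := a.prop
    have hb : k + 4 ≤ b.val.val := b.prop
    have hra : (mgRho k a.val).val = a.val.val - k + 1 := mgRho_fixed (by omega)
    have hrb : (mgRho k b.val).val = b.val.val - k + 1 := mgRho_fixed (by omega)
    show _ ↔ (GG k).Adj a.val b.val
    rw [GG_adj_other (by omega)]
    rw [adj13_per _ _ (by omega) (by omega)]
    show ((a.val.val - (k+4)) + 1 = b.val.val - (k+4) ∨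
          (b.val.val - (k+4)) + 1 = a.val.val - (k+4)) ↔ _
    omega

theorem mg_upper (hk : 1 ≤ k) :
    ∃ G : SimpleGraph (Fin (k+12)), G.Connected ∧ metricSubgraphsArePaths G := by
  refine ⟨GG k, GG_conn hk, ⟨k, hk, ?_⟩, ⟨4, by omega, ?_⟩, ⟨8, by omega, ?_⟩⟩
  · rw [GG_center hk]; exact ⟨isoC hk⟩
  · rw [GG_annulus hk]; exact ⟨isoA hk⟩
  · rw [GG_periphery hk]; exact ⟨isoP hk⟩

theorem exists_graph_with_path_metric_subgraphs_iff
    (n : ℕ) (hn : 0 < n) :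
    (∃ G : SimpleGraph (Fin n), G.Connected ∧ metricSubgraphsArePaths G) ↔ 13 ≤ n := by
  constructor
  · rintro ⟨G, hc, h⟩
    exact mg_lower G hc h
  · intro h13
    obtain ⟨k, rfl⟩ : ∃ k, n = k + 12 := ⟨n - 12, by omega⟩
    exact mg_upper (by omega)
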